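/- If G is a connected finite simple graph whose distance matrix has rank 3, then G is isomorphic to one of the following three graphs: the complete graph K_3, the path P_3 on three vertices, or the cycle C_4 on four vertices. -/

import Mathlib

open SimpleGraph

/-- The distance matrix of a finite simple graph, over ℚ: the `(u,v)` entry is the
graph distance between `u` and `v`. -/
noncomputable def distMatrix {V : Type*} [Fintype V] (G : SimpleGraph V) : Matrix V V ℚ :=
  fun u v => (G.dist u v : ℚ)

open Matrix



section DetHelpers

variable {R : Type*} [CommRing R]

def det3 (a b c d e f g h i : R) : R :=
  a*e*i - a*f*h - b*d*i + b*f*g + c*d*h - c*e*g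

def myDet4 (M : Matrix (Fin 4) (Fin 4) R) : R :=
  M 0 0 * det3 (M 1 1) (M 1 2) (M 1 3) (M 2 1) (M 2 2) (M 2 3) (M 3 1) (M 3 2) (M 3 3)
  - M 0 1 * det3 (M 1 0) (M 1 2) (M 1 3) (M 2 0) (M 2 2) (M 2 3) (M 3 0) (M 3 2) (M 3 3)
  + M 0 2 * det3 (M 1 0) (M 1 1) (M 1 3) (M 2 0) (M 2 1) (M 2 3) (M 3 0) (M 3 1) (M 3 3)
  - M 0 3 * det3 (M 1 0) (M 1 1) (M 1 2) (M 2 0) (M 2 1) (M 2 2) (M 3 0) (M 3 1) (M 3 2)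

theorem myDet4_eq (M : Matrix (Fin 4) (Fin 4) R) : M.det = myDet4 M := by
  rw [show M = !![M 0 0, M 0 1, M 0 2, M 0 3; M 1 0, M 1 1, M 1 2, M 1 3;
      M 2 0, M 2 1, M 2 2, M 2 3; M 3 0, M 3 1, M 3 2, M 3 3] by
    ext i j; fin_cases i <;> fin_cases j <;> rfl]
  simp [Matrix.det_succ_row_zero, Fin.sum_univ_succ, Matrix.det_fin_three, myDet4, det3,
    Fin.succAbove, Fin.castSucc, Fin.castAdd, Fin.castLE]
  ring

theorem myDet4_map (M : Matrix (Fin 4) (Fin 4) ℤ) :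
    myDet4 (M.map ((↑) : ℤ → ℚ)) = ((myDet4 M : ℤ) : ℚ) := by
  simp only [myDet4, det3, Matrix.map_apply]
  push_cast
  ring

end DetHelpers

/-- Selecting rows/columns cannot increase rank. -/
theorem rank_submatrix_le' {V : Type*} [Fintype V] [DecidableEq V] {k : ℕ}
    (A : Matrix V V ℚ) (f : Fin k → V) : (A.submatrix f f).rank ≤ A.rank := by
  have h : A.submatrix f f =
      (Matrix.of fun i v => if f i = v then (1:ℚ) else 0) * A *
        (Matrix.of fun v j => if f j = v then (1:ℚ) else 0) := by
    ext i j
    simp [Matrix.mul_apply, Finset.sum_ite_eq, submatrix_apply, ite_and]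
  rw [h]
  exact le_trans (Matrix.rank_mul_le _ _) (le_trans inf_le_left (Matrix.rank_mul_le_right _ _))

theorem rank_ge_of_submatrix {V : Type*} [Fintype V] [DecidableEq V] {k : ℕ}
    (A : Matrix V V ℚ) (f : Fin k → V) (h : (A.submatrix f f).det ≠ 0) :
    k ≤ A.rank := by
  have := Matrix.rank_of_isUnit (A.submatrix f f)
    (Matrix.isUnit_iff_isUnit_det _ |>.2 (isUnit_iff_ne_zero.2 h))
  calc k = Fintype.card (Fin k) := (Fintype.card_fin k).symm
    _ = (A.submatrix f f).rank := this.symm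
    _ ≤ A.rank := rank_submatrix_le' A f

/-- Central tool: if four vertices realize an integer matrix with nonzero determinant
inside the distance matrix, the rank is at least 4. -/
theorem rank_ge_four {V : Type*} [Fintype V] [DecidableEq V] (G : SimpleGraph V)
    (f : Fin 4 → V) (N : Matrix (Fin 4) (Fin 4) ℤ)
    (hN : ∀ i j, distMatrix G (f i) (f j) = ((N i j : ℤ) : ℚ))
    (hdet : myDet4 N ≠ 0) : 4 ≤ (distMatrix G).rank := by
  apply rank_ge_of_submatrix _ f
  have hsub : (distMatrix G).submatrix f f = N.map ((↑) : ℤ → ℚ) := by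
    ext i j; simpa using hN i j
  rw [hsub, myDet4_eq, myDet4_map]
  exact_mod_cast hdet


section DistLemmas

variable {V : Type*} (G : SimpleGraph V)

theorem dist_chain (hG : G.Connected) {u v : V} (p : G.Walk u v) :
    ∀ j i : ℕ, i ≤ j → j ≤ p.length → G.dist (p.getVert i) (p.getVert j) ≤ j - i := by
  intro j
  induction j with
  | zero =>
    intro i hi _
    simp only [Nat.le_zero] at hi
    subst hi
    simp
  | succ j ih =>
    intro i hi hj
    rcases Nat.lt_or_ge i (j+1) with h | h
    · have hij : i ≤ j := by omega
      have h1 := ih i hij (by omega)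
      have hadj : G.Adj (p.getVert j) (p.getVert (j+1)) := p.adj_getVert_succ (by omega)
      have h2 : G.dist (p.getVert j) (p.getVert (j+1)) = 1 :=
        (SimpleGraph.dist_eq_one_iff_adj).2 hadj
      have h3 := hG.dist_triangle (u := p.getVert i) (v := p.getVert j) (w := p.getVert (j+1))
      omega
    · have : i = j + 1 := by omega
      subst this
      simp

theorem dist_le_two_of_rank_three {V : Type*} [Fintype V] [DecidableEq V] (G : SimpleGraph V)
    (hG : G.Connected) (hr : (distMatrix G).rank = 3) : ∀ u v : V, G.dist u v ≤ 2 := by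
  by_contra h
  push_neg at h
  obtain ⟨u, v, huv⟩ := h
  obtain ⟨p, hp⟩ := hG.exists_walk_length_eq_dist u v
  have hp3 : 3 ≤ p.length := by omega
  have hle : ∀ i j : ℕ, i ≤ j → j ≤ 3 → G.dist (p.getVert i) (p.getVert j) ≤ j - i :=
    fun i j h1 h2 => dist_chain G hG p j i h1 (by omega)
  have hge : ∀ i j : ℕ, i ≤ j → j ≤ 3 → j - i ≤ G.dist (p.getVert i) (p.getVert j) := by
    intro i j h1 h2
    have t1 := hG.dist_triangle (u := u) (v := p.getVert i) (w := p.getVert j)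
    have t2 := hG.dist_triangle (u := u) (v := p.getVert j) (w := v)
    have b1 : G.dist u (p.getVert i) ≤ i := by
      have := dist_chain G hG p i 0 (by omega) (by omega)
      rwa [p.getVert_zero, Nat.sub_zero] at this
    have b2 : G.dist (p.getVert j) v ≤ p.length - j := by
      have := dist_chain G hG p p.length j (by omega) le_rfl
      rwa [p.getVert_length] at this
    omega
  have hex : ∀ i j : ℕ, i ≤ j → j ≤ 3 → G.dist (p.getVert i) (p.getVert j) = j - i :=
    fun i j h1 h2 => le_antisymm (hle i j h1 h2) (hge i j h1 h2)
  have e00 : G.dist (p.getVert 0) (p.getVert 0) = 0 := by simp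
  have e11 : G.dist (p.getVert 1) (p.getVert 1) = 0 := by simp
  have e22 : G.dist (p.getVert 2) (p.getVert 2) = 0 := by simp
  have e33 : G.dist (p.getVert 3) (p.getVert 3) = 0 := by simp
  have e01 : G.dist (p.getVert 0) (p.getVert 1) = 1 := hex 0 1 (by omega) (by omega)
  have e02 : G.dist (p.getVert 0) (p.getVert 2) = 2 := hex 0 2 (by omega) (by omega)
  have e03 : G.dist (p.getVert 0) (p.getVert 3) = 3 := hex 0 3 (by omega) (by omega)
  have e12 : G.dist (p.getVert 1) (p.getVert 2) = 1 := hex 1 2 (by omega) (by omega)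
  have e13 : G.dist (p.getVert 1) (p.getVert 3) = 2 := hex 1 3 (by omega) (by omega)
  have e23 : G.dist (p.getVert 2) (p.getVert 3) = 1 := hex 2 3 (by omega) (by omega)
  have e10 : G.dist (p.getVert 1) (p.getVert 0) = 1 := by rw [SimpleGraph.dist_comm]; exact e01
  have e20 : G.dist (p.getVert 2) (p.getVert 0) = 2 := by rw [SimpleGraph.dist_comm]; exact e02
  have e30 : G.dist (p.getVert 3) (p.getVert 0) = 3 := by rw [SimpleGraph.dist_comm]; exact e03
  have e21 : G.dist (p.getVert 2) (p.getVert 1) = 1 := by rw [SimpleGraph.dist_comm]; exact e12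
  have e31 : G.dist (p.getVert 3) (p.getVert 1) = 2 := by rw [SimpleGraph.dist_comm]; exact e13
  have e32 : G.dist (p.getVert 3) (p.getVert 2) = 1 := by rw [SimpleGraph.dist_comm]; exact e23
  have g0 : p.getVert 0 = u := p.getVert_zero
  rw [g0] at e00 e01 e02 e03 e10 e20 e30
  have h4 : 4 ≤ (distMatrix G).rank := by
    apply rank_ge_four G (fun i : Fin 4 => p.getVert i)
      !![0,1,2,3; 1,0,1,2; 2,1,0,1; 3,2,1,0]
    · intro i j
      fin_cases i <;> fin_cases j <;>
        simp [distMatrix, e00, e01, e02, e03, e10, e11, e12, e13, e20, e21, e22, e23,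
          e30, e31, e32, e33]
    · decide
  omega

theorem distMatrix_entry {V : Type*} [Fintype V] [DecidableEq V] (G : SimpleGraph V)
    [DecidableRel G.Adj] (hG : G.Connected) (h2 : ∀ u v : V, G.dist u v ≤ 2) (u v : V) :
    distMatrix G u v =
      ((if u = v then (0:ℤ) else if G.Adj u v then 1 else 2 : ℤ) : ℚ) := by
  classical
  by_cases h : u = v
  · subst h; simp [distMatrix]
  · by_cases ha : G.Adj u v
    · have : G.dist u v = 1 := SimpleGraph.dist_eq_one_iff_adj.2 ha
      simp [distMatrix, this, h, ha]
    · have hpos := hG.pos_dist_of_ne h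
      have hne1 : G.dist u v ≠ 1 := fun hc => ha (SimpleGraph.dist_eq_one_iff_adj.1 hc)
      have hd2 : G.dist u v = 2 := by have := h2 u v; omega
      simp [distMatrix, hd2, h, ha]

theorem common_nbr {V : Type*} (G : SimpleGraph V) (hG : G.Connected)
    {u v : V} (hd : G.dist u v = 2) : ∃ w, G.Adj u w ∧ G.Adj w v := by
  obtain ⟨p, hp⟩ := hG.exists_walk_length_eq_dist u v
  rw [hd] at hp
  refine ⟨p.getVert 1, ?_, ?_⟩
  · have h01 := p.adj_getVert_succ (i := 0) (by omega)
    rwa [p.getVert_zero] at h01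
  · have h12 := p.adj_getVert_succ (i := 1) (by omega)
    have hv : p.getVert 2 = v := by
      have := p.getVert_length; rwa [hp] at this
    rwa [hv] at h12

end DistLemmas


def bv (b : Bool) : ℤ := if b then 1 else 2

def pat5 (e : Fin 10 → ℤ) : Matrix (Fin 5) (Fin 5) ℤ :=
  !![0, e 0, e 1, e 2, e 3;
     e 0, 0, e 4, e 5, e 6;
     e 1, e 4, 0, e 7, e 8;
     e 2, e 5, e 7, 0, e 9;
     e 3, e 6, e 8, e 9, 0]

def pat4 (e : Fin 6 → ℤ) : Matrix (Fin 4) (Fin 4) ℤ :=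
  !![0, e 0, e 1, e 2;
     e 0, 0, e 3, e 4;
     e 1, e 3, 0, e 5;
     e 2, e 4, e 5, 0]

def pat3 (e : Fin 3 → Bool) : Matrix (Fin 3) (Fin 3) Bool :=
  !![false, e 0, e 1;
     e 0, false, e 2;
     e 1, e 2, false]

set_option maxHeartbeats 4000000 in
set_option maxRecDepth 10000 in
theorem L5core : ∀ b0 b1 b2 b3 b4 b5 b6 b7 b8 b9 : Bool, ∃ k : Fin 5,
    myDet4 ((pat5 ![bv b0, bv b1, bv b2, bv b3, bv b4, bv b5, bv b6, bv b7, bv b8, bv b9]).submatrix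
      k.succAbove k.succAbove) ≠ 0 := by decide

instance pat3_decPred (x : Fin 3 → Bool) (i : Fin 3) : DecidablePred (fun j => pat3 x i j = true) :=
  fun j => instDecidableEqBool _ _

instance pat4_decPred (x : Fin 6 → ℤ) (i : Fin 4) : DecidablePred (fun j => pat4 x i j = 1) :=
  fun j => Int.instDecidableEq _ _

set_option maxHeartbeats 4000000 in
set_option maxRecDepth 10000 in
theorem L4core : ∀ b0 b1 b2 b3 b4 b5 : Bool,
    myDet4 (pat4 ![bv b0, bv b1, bv b2, bv b3, bv b4, bv b5]) = 0 →
    ∃ e : Equiv.Perm (Fin 4), ∀ i j : Fin 4,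
      pat4 ![bv b0, bv b1, bv b2, bv b3, bv b4, bv b5] i j = 1 ↔
        (cycleGraph 4).Adj (e i) (e j) := by decide

set_option maxHeartbeats 4000000 in
set_option maxRecDepth 10000 in
theorem L3core : ∀ b0 b1 b2 : Bool,
    (∀ i j : Fin 3, i ≠ j →
      (pat3 ![b0, b1, b2] i j = true ∨
        ∃ k : Fin 3, pat3 ![b0, b1, b2] i k = true ∧ pat3 ![b0, b1, b2] k j = true)) →
    (∃ e : Equiv.Perm (Fin 3), ∀ i j : Fin 3,
        pat3 ![b0, b1, b2] i j = true ↔ e i ≠ e j) ∨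
    (∃ e : Equiv.Perm (Fin 3), ∀ i j : Fin 3,
        pat3 ![b0, b1, b2] i j = true ↔
          ((e i : ℕ) + 1 = (e j : ℕ) ∨ (e j : ℕ) + 1 = (e i : ℕ))) := by decide


theorem pat5_eq (a : Fin 5 → Fin 5 → Bool) (hs : ∀ i j, a i j = a j i)
    (hi : ∀ i, a i i = false) (i j : Fin 5) :
    pat5 ![bv (a 0 1), bv (a 0 2), bv (a 0 3), bv (a 0 4), bv (a 1 2), bv (a 1 3),
      bv (a 1 4), bv (a 2 3), bv (a 2 4), bv (a 3 4)] i j =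
      if i = j then 0 else if a i j then 1 else 2 := by
  fin_cases i <;> fin_cases j <;>
    (try simp [pat5, bv, hi 0, hi 1, hi 2, hi 3, hi 4, hs 1 0, hs 2 0, hs 2 1, hs 3 0,
      hs 3 1, hs 3 2, hs 4 0, hs 4 1, hs 4 2, hs 4 3]) <;> (try rfl)

theorem pat4_eq (a : Fin 4 → Fin 4 → Bool) (hs : ∀ i j, a i j = a j i)
    (hi : ∀ i, a i i = false) (i j : Fin 4) :
    pat4 ![bv (a 0 1), bv (a 0 2), bv (a 0 3), bv (a 1 2), bv (a 1 3), bv (a 2 3)] i j =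
      if i = j then 0 else if a i j then 1 else 2 := by
  fin_cases i <;> fin_cases j <;>
    (try simp [pat4, bv, hi 0, hi 1, hi 2, hi 3, hs 1 0, hs 2 0, hs 2 1, hs 3 0,
      hs 3 1, hs 3 2]) <;> (try rfl)

theorem pat3_eq (a : Fin 3 → Fin 3 → Bool) (hs : ∀ i j, a i j = a j i)
    (hi : ∀ i, a i i = false) (i j : Fin 3) :
    pat3 ![a 0 1, a 0 2, a 1 2] i j = a i j := by
  fin_cases i <;> fin_cases j <;>
    (try simp [pat3, hi 0, hi 1, hi 2, hs 1 0, hs 2 0, hs 2 1]) <;> (try rfl)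

theorem ifval_eq_one {i j : α} [Decidable (i = j)] {b : Bool} (hb : i = j → b = false) :
    ((if i = j then (0:ℤ) else if b then 1 else 2) = 1) ↔ b = true := by
  by_cases h : i = j
  · simp [h, hb h]
  · by_cases hb' : b <;> simp [h, hb']

/-- If G is a connected finite simple graph whose distance matrix has rank 3, then G is
isomorphic to K₃, P₃, or C₄. -/
theorem distRank_eq_three_classification {V : Type*} [Fintype V] (G : SimpleGraph V)
    (hG : G.Connected) (hr : (distMatrix G).rank = 3) :
    Nonempty (G ≃g (⊤ : SimpleGraph (Fin 3))) ∨
      Nonempty (G ≃g pathGraph 3) ∨ Nonempty (G ≃g cycleGraph 4) := by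
  classical
  have hcard : 3 ≤ Fintype.card V := by
    have := (distMatrix G).rank_le_card_width
    omega
  have h2 : ∀ u v : V, G.dist u v ≤ 2 := dist_le_two_of_rank_three G hG hr
  have hDE := distMatrix_entry G hG h2
  -- case n ≥ 5 : contradiction
  by_cases h5 : 5 ≤ Fintype.card V
  · exfalso
    set σ := Fintype.equivFin V with hσ
    set emb : Fin 5 → V := fun i => σ.symm (Fin.castLE h5 i) with hemb
    have hinj : Function.Injective emb := by
      intro i j hij
      have := σ.symm.injective hij
      exact Fin.castLE_injective h5 this
    set a : Fin 5 → Fin 5 → Bool := fun i j => decide (G.Adj (emb i) (emb j)) with ha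
    have hs : ∀ i j, a i j = a j i := fun i j => decide_eq_decide.mpr (G.adj_comm _ _)
    have hi : ∀ i, a i i = false := fun i => decide_eq_false_iff_not.mpr (G.irrefl)
    obtain ⟨k, hk⟩ := L5core (a 0 1) (a 0 2) (a 0 3) (a 0 4) (a 1 2) (a 1 3) (a 1 4)
      (a 2 3) (a 2 4) (a 3 4)
    have h4 : 4 ≤ (distMatrix G).rank := by
      apply rank_ge_four G (fun i => emb (k.succAbove i)) _ _ hk
      intro i j
      rw [Matrix.submatrix_apply, pat5_eq a hs hi, hDE]
      congr 1
      by_cases hxy : k.succAbove i = k.succAbove j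
      · simp [hxy]
      · have hne : emb (k.succAbove i) ≠ emb (k.succAbove j) := fun hc => hxy (hinj hc)
        simp only [if_neg hxy, if_neg hne]
        by_cases hadj : G.Adj (emb (k.succAbove i)) (emb (k.succAbove j)) <;>
          simp [ha, hadj]
    omega
  -- now n = 3 or n = 4
  rcases (by omega : Fintype.card V = 3 ∨ Fintype.card V = 4) with h3 | h4
  · -- n = 3
    set σ := Fintype.equivFinOfCardEq h3 with hσ
    set a : Fin 3 → Fin 3 → Bool :=
      fun i j => decide (G.Adj (σ.symm i) (σ.symm j)) with ha
    have hs : ∀ i j, a i j = a j i := fun i j => decide_eq_decide.mpr (G.adj_comm _ _)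
    have hi : ∀ i, a i i = false := fun i => decide_eq_false_iff_not.mpr (G.irrefl)
    have haiff : ∀ i j, a i j = true ↔ G.Adj (σ.symm i) (σ.symm j) := by
      intro i j; simp [ha]
    have hcn : ∀ i j : Fin 3, i ≠ j →
        (pat3 ![a 0 1, a 0 2, a 1 2] i j = true ∨
          ∃ k : Fin 3, pat3 ![a 0 1, a 0 2, a 1 2] i k = true ∧
            pat3 ![a 0 1, a 0 2, a 1 2] k j = true) := by
      intro i j hij
      rw [pat3_eq a hs hi]
      have hne : σ.symm i ≠ σ.symm j := fun hc => hij (σ.symm.injective hc)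
      by_cases hadj : G.Adj (σ.symm i) (σ.symm j)
      · exact Or.inl ((haiff i j).mpr hadj)
      · right
        have hpos := hG.pos_dist_of_ne hne
        have hne1 : G.dist (σ.symm i) (σ.symm j) ≠ 1 :=
          fun hc => hadj (SimpleGraph.dist_eq_one_iff_adj.1 hc)
        have hd2 : G.dist (σ.symm i) (σ.symm j) = 2 := by
          have := h2 (σ.symm i) (σ.symm j); omega
        obtain ⟨w, hw1, hw2⟩ := common_nbr G hG hd2
        refine ⟨σ w, ?_, ?_⟩
        · rw [pat3_eq a hs hi, haiff]; simpa using hw1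
        · rw [pat3_eq a hs hi, haiff]; simpa using hw2
    rcases L3core (a 0 1) (a 0 2) (a 1 2) hcn with ⟨e, he⟩ | ⟨e, he⟩
    · left
      refine ⟨⟨σ.trans e, ?_⟩⟩
      intro u v
      have := he (σ u) (σ v)
      rw [pat3_eq a hs hi, haiff] at this
      simp only [top_adj, Equiv.trans_apply]
      rw [← this]
      simp
    · right; left
      refine ⟨⟨σ.trans e, ?_⟩⟩
      intro u v
      have := he (σ u) (σ v)
      rw [pat3_eq a hs hi, haiff] at this
      simp only [Equiv.trans_apply, pathGraph_adj]
      rw [← this]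
      simp
  · -- n = 4
    right; right
    set σ := Fintype.equivFinOfCardEq h4 with hσ
    set a : Fin 4 → Fin 4 → Bool :=
      fun i j => decide (G.Adj (σ.symm i) (σ.symm j)) with ha
    have hs : ∀ i j, a i j = a j i := fun i j => decide_eq_decide.mpr (G.adj_comm _ _)
    have hi : ∀ i, a i i = false := fun i => decide_eq_false_iff_not.mpr (G.irrefl)
    have haiff : ∀ i j, a i j = true ↔ G.Adj (σ.symm i) (σ.symm j) := by
      intro i j; simp [ha]
    set bl : Fin 6 → ℤ :=
      ![bv (a 0 1), bv (a 0 2), bv (a 0 3), bv (a 1 2), bv (a 1 3), bv (a 2 3)] with hbl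
    have hM : distMatrix G = ((pat4 bl).map ((↑) : ℤ → ℚ)).submatrix σ σ := by
      ext u v
      rw [Matrix.submatrix_apply, Matrix.map_apply, hbl, pat4_eq a hs hi, hDE]
      congr 1
      by_cases hxy : u = v
      · simp [hxy]
      · have hσne : σ u ≠ σ v := fun hc => hxy (σ.injective hc)
        simp only [if_neg hxy, if_neg hσne]
        by_cases hadj : G.Adj u v
        · have : a (σ u) (σ v) = true := by
            rw [haiff]; simpa using hadj
          simp [this, hadj]
        · have : a (σ u) (σ v) = false := by
            rw [← Bool.not_eq_true, haiff]; simpa using hadj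
          simp [this, hadj]
    have hdet0 : myDet4 (pat4 bl) = 0 := by
      have hd : (distMatrix G).det = 0 := by
        by_contra hd
        have := Matrix.rank_of_isUnit (distMatrix G)
          ((Matrix.isUnit_iff_isUnit_det _).2 (isUnit_iff_ne_zero.2 hd))
        rw [hr, h4] at this
        omega
      rw [hM, Matrix.det_submatrix_equiv_self] at hd
      have hcast : ((pat4 bl).det : ℚ) = 0 := by
        rw [show (pat4 bl).map ((↑) : ℤ → ℚ) =
            (Int.castRingHom ℚ).mapMatrix (pat4 bl) from rfl,
          ← RingHom.map_det] at hd
        simpa using hd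
      rw [myDet4_eq] at hcast
      exact_mod_cast hcast
    obtain ⟨e, he⟩ := L4core (a 0 1) (a 0 2) (a 0 3) (a 1 2) (a 1 3) (a 2 3) hdet0
    refine ⟨⟨σ.trans e, ?_⟩⟩
    intro u v
    have := he (σ u) (σ v)
    rw [show (![bv (a 0 1), bv (a 0 2), bv (a 0 3), bv (a 1 2), bv (a 1 3), bv (a 2 3)] :
      Fin 6 → ℤ) = bl from rfl, pat4_eq a hs hi,
      ifval_eq_one (fun hc => hc ▸ hi (σ u)), haiff] at this
    simp only [Equiv.trans_apply]
    rw [← this]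
    simp
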